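/- arXiv:2304.04153 — 3 statements merged into one kernel-verified Lean document; each statement's English description precedes it below -/
import Mathlib

section
/- Consider a two-player game with strategy sets X, Y and continuously differentiable payoffs θ_x(x,y), θ_y(x,y). Every Minty Nash equilibrium is a Nash equilibrium, provided X and Y are convex and closed. -/
open scoped RealInnerProductSpace

lemma minty_min {k : ℕ} {K : Set (EuclideanSpace ℝ (Fin k))}
    (hKconv : Convex ℝ K) {f : EuclideanSpace ℝ (Fin k) → ℝ} (hf : ContDiff ℝ 1 f)
    {xs : EuclideanSpace ℝ (Fin k)} (hxs : xs ∈ K)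
    (hM : ∀ x ∈ K, ⟪gradient f x, x - xs⟫ ≥ 0) :
    ∀ x ∈ K, f xs ≤ f x := by
  intro x hx
  set v := x - xs with hv
  set φ : ℝ → ℝ := fun t => f (xs + t • v) with hφ
  have hdiff : Differentiable ℝ f := hf.differentiable one_ne_zero
  have hline : ∀ t : ℝ, HasDerivAt (fun t : ℝ => xs + t • v) v t := fun t =>
    by simpa using ((hasDerivAt_id t).smul_const v).const_add xs
  have hder : ∀ t : ℝ, HasDerivAt φ (fderiv ℝ f (xs + t • v) v) t := fun t =>
    (hdiff (xs + t • v)).hasFDerivAt.comp_hasDerivAt t (hline t)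
  have hfd : ∀ p v', fderiv ℝ f p v' = ⟪gradient f p, v'⟫ := by
    intro p v'
    rw [gradient, InnerProductSpace.toDual_symm_apply]
  have hmem : ∀ t : ℝ, t ∈ Set.Icc (0:ℝ) 1 → xs + t • v ∈ K := by
    intro t ht
    have : xs + t • v = (1 - t) • xs + t • x := by
      rw [hv]; module
    rw [this]
    exact hKconv hxs hx (by linarith [ht.1, ht.2]) ht.1 (by ring)
  have hmono : MonotoneOn φ (Set.Icc 0 1) := by
    apply monotoneOn_of_deriv_nonneg (convex_Icc 0 1)
    · exact (fun t _ => (hder t).differentiableAt.continuousAt.continuousWithinAt)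
    · exact fun t _ => (hder t).differentiableAt.differentiableWithinAt
    · intro t ht
      rw [interior_Icc] at ht
      have hpt : xs + t • v ∈ K := hmem t ⟨le_of_lt ht.1, le_of_lt ht.2⟩
      have h1 := hM _ hpt
      have h2 : (xs + t • v) - xs = t • v := by abel
      rw [h2, real_inner_smul_right] at h1
      have h3 : (0:ℝ) ≤ ⟪gradient f (xs + t • v), v⟫ := by
        by_contra hcon
        push_neg at hcon
        nlinarith [ht.1]
      rw [(hder t).deriv, hfd]
      exact h3
  have h0 : φ 0 ≤ φ 1 := hmono (by norm_num) (by norm_num) zero_le_one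
  simpa [hφ, hv] using h0

/-- Every Minty Nash equilibrium of a two-player game with continuously differentiable
payoffs and closed convex strategy sets is a Nash equilibrium. -/
theorem stmt_8 {n m : ℕ} (X : Set (EuclideanSpace ℝ (Fin n))) (Y : Set (EuclideanSpace ℝ (Fin m)))
    (θx : EuclideanSpace ℝ (Fin n) → EuclideanSpace ℝ (Fin m) → ℝ)
    (θy : EuclideanSpace ℝ (Fin n) → EuclideanSpace ℝ (Fin m) → ℝ)
    (hθx : ∀ y, ContDiff ℝ 1 (fun x => θx x y))
    (hθy : ∀ x, ContDiff ℝ 1 (fun y => θy x y))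
    (hXcl : IsClosed X) (hXconv : Convex ℝ X) (hYcl : IsClosed Y) (hYconv : Convex ℝ Y)
    (xs : EuclideanSpace ℝ (Fin n)) (ys : EuclideanSpace ℝ (Fin m))
    (hxs : xs ∈ X) (hys : ys ∈ Y)
    (hMNEx : ∀ x ∈ X, ⟪gradient (fun u => θx u ys) x, x - xs⟫ ≥ 0)
    (hMNEy : ∀ y ∈ Y, ⟪gradient (fun v => θy xs v) y, y - ys⟫ ≥ 0) :
    (∀ x ∈ X, θx xs ys ≤ θx x ys) ∧ (∀ y ∈ Y, θy xs ys ≤ θy xs y) := by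
  exact ⟨minty_min hXconv (hθx ys) hxs hMNEx, minty_min hYconv (hθy xs) hys hMNEy⟩
end

section
/- For the extra-gradient iteration x^{k+0.5} := Proj_X(x^k - tF(x^k)), x^{k+1} := Proj_X(x^k - tF(x^{k+0.5})) over a closed convex set X, with F L-Lipschitz and 0 < t ≤ 1/(√2 L), for every x ∈ X: ⟨F(x^{k+0.5}), x^{k+0.5} - x⟩ + (1/(4t))‖x^{k+0.5} - x^k‖² ≤ (1/(2t))[‖x^k - x‖² - ‖x^{k+1} - x‖²]. -/
open scoped RealInnerProductSpace

private lemma eg_amgm (a b : ℝ) (ha : 0 ≤ a) (hb : 0 ≤ b) :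
    (1 / Real.sqrt 2) * (a * b) ≤ (1/4) * a^2 + (1/2) * b^2 := by
  set s := Real.sqrt 2 with hs_def
  have hs : 0 < s := Real.sqrt_pos.mpr (by norm_num)
  have hs2 : s^2 = 2 := Real.sq_sqrt (by norm_num)
  rw [div_mul_eq_mul_div, one_mul, div_le_iff₀ hs]
  have key : ((1/4)*a^2 + (1/2)*b^2)*s - a*b = (s/4)*(a - s*b)^2 := by
    linear_combination ((a*b)/2 - s*b^2/4) * hs2
  nlinarith [mul_nonneg (by positivity : (0:ℝ) ≤ s/4) (sq_nonneg (a - s*b)), key]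

private lemma eg_inner_three {n : ℕ} (a b c : EuclideanSpace ℝ (Fin n)) :
    ⟪b - a, c - b⟫ = (1/2) * (‖a - c‖^2 - ‖b - c‖^2 - ‖b - a‖^2) := by
  simp only [@norm_sub_sq_real, inner_sub_left, inner_sub_right,
    real_inner_self_eq_norm_sq]
  rw [real_inner_comm b a]
  ring

/-- Key inequality for the extra-gradient step with `F` L-Lipschitz and `0 < t ≤ 1/(√2 L)`:
`⟨F(x^{k+0.5}), x^{k+0.5} - x⟩ + (1/(4t))‖x^{k+0.5} - x^k‖²
  ≤ (1/(2t))[‖x^k - x‖² - ‖x^{k+1} - x‖²]` for every `x ∈ X`. -/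
theorem stmt_16 {n : ℕ} (X : Set (EuclideanSpace ℝ (Fin n)))
    (F : EuclideanSpace ℝ (Fin n) → EuclideanSpace ℝ (Fin n))
    (hcl : IsClosed X) (hconv : Convex ℝ X)
    (L : ℝ) (hL : 0 < L) (hLip : ∀ u v, ‖F u - F v‖ ≤ L * ‖u - v‖)
    (t : ℝ) (ht : 0 < t) (htL : t ≤ 1 / (Real.sqrt 2 * L))
    (proj : EuclideanSpace ℝ (Fin n) → EuclideanSpace ℝ (Fin n))
    (hprojmem : ∀ z, proj z ∈ X)
    (hproj : ∀ z, ∀ y ∈ X, ⟪y - proj z, proj z - z⟫ ≥ 0)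
    (xk xh xk1 : EuclideanSpace ℝ (Fin n)) (hxk : xk ∈ X)
    (hhalf : xh = proj (xk - t • F xk))
    (hfull : xk1 = proj (xk - t • F xh)) :
    ∀ x ∈ X,
      ⟪F xh, xh - x⟫ + (1 / (4 * t)) * ‖xh - xk‖ ^ 2 ≤
        (1 / (2 * t)) * (‖xk - x‖ ^ 2 - ‖xk1 - x‖ ^ 2) := by
  intro x hx
  have htne : t ≠ 0 := ht.ne'
  have hxk1 : xk1 ∈ X := by rw [hfull]; exact hprojmem _
  -- projection inequalities
  have h1 : ⟪xk1 - xh, xh - (xk - t • F xk)⟫ ≥ 0 := by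
    have h := hproj (xk - t • F xk) xk1 hxk1
    rwa [← hhalf] at h
  have h2 : ⟪x - xk1, xk1 - (xk - t • F xh)⟫ ≥ 0 := by
    have h := hproj (xk - t • F xh) x hx
    rwa [← hfull] at h
  -- expand them
  have e1 : ⟪xk1 - xh, xh - (xk - t • F xk)⟫
      = ⟪xh - xk, xk1 - xh⟫ - t * ⟪F xk, xh - xk1⟫ := by
    simp only [inner_sub_left, inner_sub_right, real_inner_smul_right]
    rw [real_inner_comm xk1 (F xk), real_inner_comm xh (F xk),
      real_inner_comm xk1 xh, real_inner_comm xk1 xk, real_inner_comm xh xk]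
    ring
  have e2 : ⟪x - xk1, xk1 - (xk - t • F xh)⟫
      = ⟪xk1 - xk, x - xk1⟫ - t * ⟪F xh, xk1 - x⟫ := by
    simp only [inner_sub_left, inner_sub_right, real_inner_smul_right]
    rw [real_inner_comm x (F xh), real_inner_comm xk1 (F xh),
      real_inner_comm x xk1, real_inner_comm x xk, real_inner_comm xk1 xk]
    ring
  have A1 : t * ⟪F xk, xh - xk1⟫ ≤ ⟪xh - xk, xk1 - xh⟫ := by
    rw [e1] at h1; linarith
  have A2 : t * ⟪F xh, xk1 - x⟫ ≤ ⟪xk1 - xk, x - xk1⟫ := by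
    rw [e2] at h2; linarith
  -- Lipschitz part
  have tL : t * L ≤ 1 / Real.sqrt 2 := by
    have hs : (0:ℝ) < Real.sqrt 2 := Real.sqrt_pos.mpr (by norm_num)
    have h := mul_le_mul_of_nonneg_right htL hL.le
    have : 1 / (Real.sqrt 2 * L) * L = 1 / Real.sqrt 2 := by
      field_simp
    linarith
  have hlip : ⟪F xh - F xk, xh - xk1⟫ ≤ L * (‖xh - xk‖ * ‖xh - xk1‖) := by
    calc ⟪F xh - F xk, xh - xk1⟫ ≤ ‖F xh - F xk‖ * ‖xh - xk1‖ := real_inner_le_norm _ _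
      _ ≤ (L * ‖xh - xk‖) * ‖xh - xk1‖ :=
        mul_le_mul_of_nonneg_right (hLip xh xk) (norm_nonneg _)
      _ = L * (‖xh - xk‖ * ‖xh - xk1‖) := by ring
  have A3 : t * ⟪F xh - F xk, xh - xk1⟫
      ≤ (1/4) * ‖xh - xk‖^2 + (1/2) * ‖xh - xk1‖^2 := by
    have h1' := mul_le_mul_of_nonneg_left hlip ht.le
    have h2' : (t * L) * (‖xh - xk‖ * ‖xh - xk1‖)
        ≤ (1 / Real.sqrt 2) * (‖xh - xk‖ * ‖xh - xk1‖) :=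
      mul_le_mul_of_nonneg_right tL (mul_nonneg (norm_nonneg _) (norm_nonneg _))
    have h3' := eg_amgm ‖xh - xk‖ ‖xh - xk1‖ (norm_nonneg _) (norm_nonneg _)
    nlinarith
  -- inner product splitting
  have e3 : t * ⟪F xh, xh - x⟫ = t * ⟪F xh, xk1 - x⟫ + t * ⟪F xk, xh - xk1⟫
      + t * ⟪F xh - F xk, xh - xk1⟫ := by
    simp only [inner_sub_left, inner_sub_right]
    ring
  -- three-point identities
  have I1 := eg_inner_three xk xk1 x
  have I2 := eg_inner_three xk xh xk1
  have nr : ‖xk - xk1‖ = ‖xk1 - xk‖ := norm_sub_rev _ _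
  have nrsq : ‖xk - xk1‖^2 = ‖xk1 - xk‖^2 := by rw [nr]
  have key : t * ⟪F xh, xh - x⟫ + (1/4) * ‖xh - xk‖^2
      ≤ (1/2) * (‖xk - x‖^2 - ‖xk1 - x‖^2) := by
    linarith
  rw [← sub_nonneg]
  have expand : (1 / (2 * t)) * (‖xk - x‖^2 - ‖xk1 - x‖^2)
      - (⟪F xh, xh - x⟫ + (1 / (4 * t)) * ‖xh - xk‖^2)
      = (1/t) * ((1/2) * (‖xk - x‖^2 - ‖xk1 - x‖^2)
        - (t * ⟪F xh, xh - x⟫ + (1/4) * ‖xh - xk‖^2)) := by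
    field_simp
  rw [expand]
  exact mul_nonneg (by positivity) (by linarith)
end

section
/- Under Condition (GP+) (for some δ > 0, t > 0 and a fixed x* ∈ Sol(VI(F;X)), 4(1+δ)t⟨F(x^{k+0.5}), x^{k+0.5} - x*⟩ + ‖x^{k+0.5} - x^k‖² ≥ 0 holds along the extra-gradient iterates), with F L-Lipschitz and t ≤ 1/(√2 L), the extra-gradient iterates satisfy Σ_{k=1}^N ‖x^{k+0.5} - x^k‖² ≤ 2(1 + 1/δ)‖x¹ - x*‖², hence min_{1 ≤ k ≤ N} ‖x^{k+0.5} - x^k‖² ≤ (2/N)(1 + 1/δ)‖x¹ - x*‖². -/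
open scoped RealInnerProductSpace

lemma ident19 {n : ℕ} (a b c : EuclideanSpace ℝ (Fin n)) :
    2 * ⟪a - b, b - c⟫ = ‖c - a‖ ^ 2 - ‖b - a‖ ^ 2 - ‖b - c‖ ^ 2 := by
  simp only [← real_inner_self_eq_norm_sq, inner_sub_left, inner_sub_right]
  ring_nf
  linarith [real_inner_comm a b, real_inner_comm a c, real_inner_comm b c]

lemma step19 {n : ℕ} (t L : ℝ) (ht : 0 < t) (hL : 0 < L) (htL : t * L * Real.sqrt 2 ≤ 1)
    (y z w u Fy Fz : EuclideanSpace ℝ (Fin n))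
    (hLipzy : ‖Fz - Fy‖ ≤ L * ‖z - y‖)
    (h1 : ⟪w - z, z - (y - t • Fy)⟫ ≥ 0)
    (h2 : ⟪u - w, w - (y - t • Fz)⟫ ≥ 0) :
    2 * t * ⟪Fz, z - u⟫ + (1/2) * ‖z - y‖ ^ 2 ≤ ‖y - u‖ ^ 2 - ‖w - u‖ ^ 2 := by
  have e1 : 2 * ⟪u - w, w - y⟫ = ‖y - u‖ ^ 2 - ‖w - u‖ ^ 2 - ‖w - y‖ ^ 2 := ident19 u w y
  have e2 : 2 * ⟪w - z, z - y⟫ = ‖y - w‖ ^ 2 - ‖z - w‖ ^ 2 - ‖z - y‖ ^ 2 := ident19 w z y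
  have erev : ‖y - w‖ = ‖w - y‖ := norm_sub_rev _ _
  have h1' : ⟪w - z, z - y⟫ + t * ⟪w - z, Fy⟫ ≥ 0 := by
    have : z - (y - t • Fy) = (z - y) + t • Fy := by abel
    rw [this, inner_add_right, real_inner_smul_right] at h1
    linarith
  have h2' : ⟪u - w, w - y⟫ + t * ⟪u - w, Fz⟫ ≥ 0 := by
    have : w - (y - t • Fz) = (w - y) + t • Fz := by abel
    rw [this, inner_add_right, real_inner_smul_right] at h2
    linarith
  have d1 : ⟪Fz, z - u⟫ = ⟪Fz, z - w⟫ + ⟪Fz, w - u⟫ := by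
    rw [← inner_add_right]; congr 1; abel
  have d2 : ⟪Fz, z - w⟫ = ⟪Fy, z - w⟫ + ⟪Fz - Fy, z - w⟫ := by
    rw [← inner_add_left]; congr 1; abel
  have d3 : ⟪Fz, w - u⟫ = -⟪u - w, Fz⟫ := by
    rw [real_inner_comm]; rw [show w - u = -(u - w) by abel, inner_neg_left]
  have d4 : ⟪Fy, z - w⟫ = -⟪w - z, Fy⟫ := by
    rw [show z - w = -(w - z) by abel, inner_neg_right, real_inner_comm]
  -- the Lipschitz / Young piece
  have hprod : 2 * t * ⟪Fz - Fy, z - w⟫ ≤ ‖z - w‖ ^ 2 + (1/2) * ‖z - y‖ ^ 2 := by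
    have cs : ⟪Fz - Fy, z - w⟫ ≤ ‖Fz - Fy‖ * ‖z - w‖ := real_inner_le_norm _ _
    have s2 : ‖Fz - Fy‖ * ‖z - w‖ ≤ (L * ‖z - y‖) * ‖z - w‖ :=
      mul_le_mul_of_nonneg_right hLipzy (norm_nonneg _)
    have hs2 : Real.sqrt 2 ^ 2 = 2 := Real.sq_sqrt (by norm_num)
    have hs0 : (0:ℝ) ≤ Real.sqrt 2 := Real.sqrt_nonneg 2
    have h2tL : 2 * (t * L) ≤ Real.sqrt 2 := by nlinarith [mul_nonneg hs0 (sub_nonneg.mpr htL)]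
    have ha : (0:ℝ) ≤ ‖z - y‖ := norm_nonneg _
    have hb : (0:ℝ) ≤ ‖z - w‖ := norm_nonneg _
    have s4 : Real.sqrt 2 * (‖z - y‖ * ‖z - w‖) ≤ ‖z - w‖ ^ 2 + (1/2) * ‖z - y‖ ^ 2 := by
      nlinarith [sq_nonneg (Real.sqrt 2 * ‖z - w‖ - ‖z - y‖)]
    have h2t : (0:ℝ) ≤ 2 * t := by linarith
    have c1 : 2 * t * ⟪Fz - Fy, z - w⟫ ≤ 2 * t * (‖Fz - Fy‖ * ‖z - w‖) :=
      mul_le_mul_of_nonneg_left cs h2t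
    have c2 : 2 * t * (‖Fz - Fy‖ * ‖z - w‖) ≤ 2 * t * ((L * ‖z - y‖) * ‖z - w‖) :=
      mul_le_mul_of_nonneg_left s2 h2t
    have c3 : 2 * t * ((L * ‖z - y‖) * ‖z - w‖) = (2 * (t * L)) * (‖z - y‖ * ‖z - w‖) := by ring
    have c4 : (2 * (t * L)) * (‖z - y‖ * ‖z - w‖) ≤ Real.sqrt 2 * (‖z - y‖ * ‖z - w‖) :=
      mul_le_mul_of_nonneg_right h2tL (mul_nonneg ha hb)
    linarith [c1, c2, c3.le, c3.ge, c4, s4]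
  have m1 : 2 * t * ⟪Fz, z - u⟫ =
      2 * t * ⟪Fy, z - w⟫ + 2 * t * ⟪Fz - Fy, z - w⟫ + 2 * t * ⟪Fz, w - u⟫ := by
    rw [d1, d2]; ring
  have m3 : 2 * t * ⟪Fz, w - u⟫ ≤ 2 * ⟪u - w, w - y⟫ := by rw [d3]; linarith
  have m4 : 2 * t * ⟪Fy, z - w⟫ ≤ 2 * ⟪w - z, z - y⟫ := by rw [d4]; linarith
  have erev2 : ‖y - w‖ ^ 2 = ‖w - y‖ ^ 2 := by rw [erev]
  linarith [m1, m3, m4, hprod, e1, e2]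

/-- Under Condition (GP+) along the extra-gradient iterates, with `F` L-Lipschitz and
`t ≤ 1/(√2 L)`, we have `Σ_{k=1}^N ‖x^{k+0.5} - x^k‖² ≤ 2(1 + 1/δ)‖x¹ - x*‖²`, hence
`min_{1 ≤ k ≤ N} ‖x^{k+0.5} - x^k‖² ≤ (2/N)(1 + 1/δ)‖x¹ - x*‖²`. -/
theorem stmt_19 {n : ℕ} (X : Set (EuclideanSpace ℝ (Fin n)))
    (F : EuclideanSpace ℝ (Fin n) → EuclideanSpace ℝ (Fin n))
    (hcl : IsClosed X) (hconv : Convex ℝ X)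
    (L : ℝ) (hL : 0 < L) (hLip : ∀ u v, ‖F u - F v‖ ≤ L * ‖u - v‖)
    (t : ℝ) (ht : 0 < t) (htL : t ≤ 1 / (Real.sqrt 2 * L))
    (δ : ℝ) (hδ : 0 < δ)
    (proj : EuclideanSpace ℝ (Fin n) → EuclideanSpace ℝ (Fin n))
    (hprojmem : ∀ z, proj z ∈ X)
    (hproj : ∀ z, ∀ y ∈ X, ⟪y - proj z, proj z - z⟫ ≥ 0)
    (x xh : ℕ → EuclideanSpace ℝ (Fin n)) (hx1 : x 1 ∈ X)
    (hhalf : ∀ k, xh k = proj (x k - t • F (x k)))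
    (hfull : ∀ k, x (k + 1) = proj (x k - t • F (xh k)))
    (xs : EuclideanSpace ℝ (Fin n)) (hxs : xs ∈ X)
    (hsol : ∀ y ∈ X, ⟪F xs, y - xs⟫ ≥ 0)
    (N : ℕ) (hN : 1 ≤ N)
    (hGP : ∀ k, 1 ≤ k → k ≤ N →
      4 * (1 + δ) * t * ⟪F (xh k), xh k - xs⟫ + ‖xh k - x k‖ ^ 2 ≥ 0) :
    (∑ k ∈ Finset.Icc 1 N, ‖xh k - x k‖ ^ 2 ≤ 2 * (1 + 1 / δ) * ‖x 1 - xs‖ ^ 2) ∧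
    (∃ k, 1 ≤ k ∧ k ≤ N ∧
      ‖xh k - x k‖ ^ 2 ≤ (2 / (N : ℝ)) * (1 + 1 / δ) * ‖x 1 - xs‖ ^ 2) := by
  have hs2pos : (0:ℝ) < Real.sqrt 2 := Real.sqrt_pos.mpr (by norm_num)
  have hsLpos : (0:ℝ) < Real.sqrt 2 * L := mul_pos hs2pos hL
  have htL' : t * L * Real.sqrt 2 ≤ 1 := by
    have := (le_div_iff₀ hsLpos).mp htL
    nlinarith [this]
  -- per-step key inequality
  have key : ∀ k, 2 * t * ⟪F (xh k), xh k - xs⟫ + (1/2) * ‖xh k - x k‖ ^ 2 ≤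
      ‖x k - xs‖ ^ 2 - ‖x (k+1) - xs‖ ^ 2 := by
    intro k
    apply step19 t L ht hL htL' (x k) (xh k) (x (k+1)) xs (F (x k)) (F (xh k)) (hLip _ _)
    · have hmem : x (k+1) ∈ X := by rw [hfull k]; exact hprojmem _
      have := hproj (x k - t • F (x k)) (x (k+1)) hmem
      rwa [← hhalf k] at this
    · have := hproj (x k - t • F (xh k)) xs hxs
      rwa [← hfull k] at this
  -- per-step bound under (GP+)
  have step : ∀ k, 1 ≤ k → k ≤ N →
      δ * ‖xh k - x k‖ ^ 2 ≤ 2 * (1 + δ) * (‖x k - xs‖ ^ 2 - ‖x (k+1) - xs‖ ^ 2) := by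
    intro k hk1 hk2
    have hgp := hGP k hk1 hk2
    have hkey := key k
    have hsc := mul_le_mul_of_nonneg_left hkey (by positivity : (0:ℝ) ≤ 2 * (1 + δ))
    nlinarith [hsc, hgp]
  -- telescoping sum
  have hsum : ∀ M, M ≤ N →
      δ * (∑ k ∈ Finset.Icc 1 M, ‖xh k - x k‖ ^ 2) + 2 * (1 + δ) * ‖x (M+1) - xs‖ ^ 2 ≤
      2 * (1 + δ) * ‖x 1 - xs‖ ^ 2 := by
    intro M
    induction M with
    | zero => intro _; simp
    | succ M ih =>
      intro hMN
      have := ih (by omega)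
      rw [Finset.sum_Icc_succ_top (by omega : 1 ≤ M + 1)]
      have hst := step (M+1) (by omega) hMN
      nlinarith [this, hst]
  have first := hsum N le_rfl
  have h1δ : δ * (1 + 1/δ) = δ + 1 := by field_simp
  have hrhs : δ * (2 * (1 + 1/δ) * ‖x 1 - xs‖ ^ 2) = 2 * (1 + δ) * ‖x 1 - xs‖ ^ 2 := by
    rw [show δ * (2 * (1 + 1/δ) * ‖x 1 - xs‖ ^ 2) = 2 * (δ * (1 + 1/δ)) * ‖x 1 - xs‖ ^ 2
      from by ring, h1δ]; ring
  have hpos : (0:ℝ) ≤ 2 * (1 + δ) * ‖x (N+1) - xs‖ ^ 2 := by positivity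
  have part1 : ∑ k ∈ Finset.Icc 1 N, ‖xh k - x k‖ ^ 2 ≤ 2 * (1 + 1/δ) * ‖x 1 - xs‖ ^ 2 := by
    have hmul : δ * (∑ k ∈ Finset.Icc 1 N, ‖xh k - x k‖ ^ 2) ≤
        δ * (2 * (1 + 1/δ) * ‖x 1 - xs‖ ^ 2) := by rw [hrhs]; linarith
    exact le_of_mul_le_mul_left hmul hδ
  refine ⟨part1, ?_⟩
  by_contra hcon
  push_neg at hcon
  have hNne : (Finset.Icc 1 N).Nonempty := ⟨1, by simp [hN]⟩
  have hlt : ∑ k ∈ Finset.Icc 1 N, (2 / (N : ℝ)) * (1 + 1/δ) * ‖x 1 - xs‖ ^ 2 <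
      ∑ k ∈ Finset.Icc 1 N, ‖xh k - x k‖ ^ 2 := by
    apply Finset.sum_lt_sum_of_nonempty hNne
    intro k hk
    rw [Finset.mem_Icc] at hk
    exact hcon k hk.1 hk.2
  have hcard : (Finset.Icc 1 N).card = N := by simp
  have hNpos : (0:ℝ) < (N : ℝ) := by exact_mod_cast hN
  rw [Finset.sum_const, hcard, nsmul_eq_mul] at hlt
  have heq : (N : ℝ) * ((2 / (N : ℝ)) * (1 + 1/δ) * ‖x 1 - xs‖ ^ 2) =
      2 * (1 + 1/δ) * ‖x 1 - xs‖ ^ 2 := by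
    field_simp
  rw [heq] at hlt
  linarith
end
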